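/- Let k be a field, H a finite group, and l a Galois extension of k with group H. Define the crossed product Δ(l,H) = ⊕_{σ∈H} l u_σ with multiplication (a u_σ)(b u_τ) = a σ(b) u_{στ}. Then the map j : Δ(l,H) → End_k(l) defined by j(a u_σ)(b) = a σ(b) is an isomorphism of k-algebras. -/

import Mathlib

/-- If `l` is a Galois extension of `k` with (Galois) group `H`,
then the map `j : Δ(l,H) = ⊕_{σ∈H} l·u_σ → End_k(l)`, `j(a u_σ)(b) = a σ(b)`,
is an isomorphism of `k`-algebras; i.e. the `k`-linear map
`f ↦ ∑_σ f(σ) • σ` is bijective, and composition in `End_k(l)` corresponds to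
the crossed product multiplication `(a u_σ)(b u_τ) = a σ(b) u_{στ}`. -/
theorem crossed_product_iso_End (k l : Type*) [Field k] [Field l] [Algebra k l]
    [IsGalois k l] [FiniteDimensional k l]
    (H : Type*) [Group H] [Fintype H] (action : H ≃* (l ≃ₐ[k] l)) :
    Function.Bijective
      (fun f : H → l => ∑ σ : H, f σ • ((action σ : l ≃ₐ[k] l).toLinearMap)) ∧
    ∀ (a b : l) (σ τ : H),
      (a • ((action σ : l ≃ₐ[k] l).toLinearMap)) ∘ₗ
          (b • ((action τ : l ≃ₐ[k] l).toLinearMap))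
        = (a * (action σ : l ≃ₐ[k] l) b) • ((action (σ * τ) : l ≃ₐ[k] l).toLinearMap) := by
  constructor
  · -- bijectivity
    set L : (H → l) →ₗ[k] (l →ₗ[k] l) :=
      { toFun := fun f => ∑ σ : H, f σ • ((action σ : l ≃ₐ[k] l).toLinearMap)
        map_add' := by
          intro f g
          simp [add_smul, Finset.sum_add_distrib]
        map_smul' := by
          intro c f
          rw [Finset.smul_sum]
          simp [smul_assoc] } with hL
    have hli : LinearIndependent l
        (fun σ : H => ((action σ : l ≃ₐ[k] l) : l →ₐ[k] l).toLinearMap) := by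
      apply (linearIndependent_toLinearMap k l l).comp
      intro σ τ h
      apply action.injective
      ext x
      exact congrArg (fun f => f x) h
    have hinj : Function.Injective L := by
      rw [← LinearMap.ker_eq_bot, LinearMap.ker_eq_bot']
      intro f hf
      have := Fintype.linearIndependent_iff.mp hli f hf
      funext σ
      exact this σ
    have hdim : Module.finrank k (H → l) = Module.finrank k (l →ₗ[k] l) := by
      rw [Module.finrank_pi_fintype, Module.finrank_linearMap]
      simp only [Finset.sum_const, Finset.card_univ, smul_eq_mul]
      congr 1
      rw [Fintype.card_congr action.toEquiv, ← Nat.card_eq_fintype_card, IsGalois.card_aut_eq_finrank]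
    exact ⟨hinj, (LinearMap.injective_iff_surjective_of_finrank_eq_finrank hdim).mp hinj⟩
  · intro a b σ τ
    ext x
    simp [mul_assoc, smul_eq_mul, mul_smul_comm]
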